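/- With q_k the unique minimizer of E_q(f) over Q_k (for k > ℓ and δ ≥ (1-m_k)/m_k), one has q_k(x_k) > 0 if and only if δ < δ_k, and q_k(x_k) = 0 if and only if δ = δ_k, where δ_k = (1/m_k)·(σ_k²/(f(x_k)-μ_k)² + 1 - m_k). Moreover q_k(x_k) > 0 implies q_k(x_i) > 0 for all i ≤ k. -/

import Mathlib

open Finset

/-- Positivity of the minimizer `q_k` at `x_k`: `q_k(x_k) > 0 ↔ δ < δ_k` and
`q_k(x_k) = 0 ↔ δ = δ_k`; moreover `q_k(x_k) > 0` implies `q_k(x_i) > 0` for `i ≤ k`. -/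
theorem chi2_qk_positivity
    (n : ℕ) (hn : 0 < n) (f p : Fin n → ℝ) (hf : Monotone f)
    (hp0 : ∀ i, 0 < p i) (hp1 : ∑ i, p i = 1)
    (δ : ℝ) (hδ : 0 ≤ δ)
    (ℓ : Fin n) (hℓ : f ℓ = f ⟨0, hn⟩)
    (hℓmax : ∀ i, f i = f ⟨0, hn⟩ → i ≤ ℓ)
    (k : Fin n) (hk : ℓ < k)
    (m μ σ2 δk : ℝ)
    (hm : m = ∑ i ∈ Finset.Iic k, p i)
    (hμ : μ = (1 / m) * ∑ i ∈ Finset.Iic k, p i * f i)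
    (hσ2 : σ2 = (1 / m) * ∑ i ∈ Finset.Iic k, p i * (f i - μ) ^ 2)
    (hδk : δk = (1 / m) * (σ2 / (f k - μ) ^ 2 + 1 - m))
    (hδ' : (1 - m) / m ≤ δ)
    (qk : Fin n → ℝ)
    (hqk : qk = fun i =>
      if i ≤ k then
        (p i / m) * (1 - ((f i - μ) / Real.sqrt σ2) * Real.sqrt (m * δ - (1 - m)))
      else 0) :
    (0 < qk k ↔ δ < δk) ∧
      (qk k = 0 ↔ δ = δk) ∧
      (0 < qk k → ∀ i ≤ k, 0 < qk i) := by
  have hkI : k ∈ Finset.Iic k := Finset.mem_Iic.mpr le_rfl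
  have hℓI : ℓ ∈ Finset.Iic k := Finset.mem_Iic.mpr hk.le
  have hmpos : 0 < m := by
    rw [hm]; exact Finset.sum_pos (fun i _ => hp0 i) ⟨k, hkI⟩
  -- f ℓ < f k
  have hfℓk : f ℓ < f k := by
    rcases lt_or_eq_of_le (hf hk.le) with h | h
    · exact h
    · exact absurd (hℓmax k (h ▸ hℓ)) (not_le.mpr hk)
  -- μ < f k
  have hμlt : μ < f k := by
    have hsum : ∑ i ∈ Finset.Iic k, p i * f i < ∑ i ∈ Finset.Iic k, p i * f k := by
      apply Finset.sum_lt_sum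
      · intro i hi
        exact mul_le_mul_of_nonneg_left (hf (Finset.mem_Iic.mp hi)) (hp0 i).le
      · exact ⟨ℓ, hℓI, mul_lt_mul_of_pos_left hfℓk (hp0 ℓ)⟩
    have : m * μ < m * f k := by
      rw [hμ]
      have : ∑ i ∈ Finset.Iic k, p i * f k = m * f k := by
        rw [hm, Finset.sum_mul]
      calc m * ((1 / m) * ∑ i ∈ Finset.Iic k, p i * f i)
          = ∑ i ∈ Finset.Iic k, p i * f i := by field_simp
        _ < m * f k := by rw [← this]; exact hsum
    exact lt_of_mul_lt_mul_left this hmpos.le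
  have hApos : 0 < f k - μ := sub_pos.mpr hμlt
  -- σ2 > 0
  have hσ2pos : 0 < σ2 := by
    rw [hσ2]
    apply mul_pos (by positivity)
    apply Finset.sum_pos'
    · intro i _; exact mul_nonneg (hp0 i).le (sq_nonneg _)
    · exact ⟨k, hkI, mul_pos (hp0 k) (pow_pos hApos 2)⟩
  set σ := Real.sqrt σ2 with hσdef
  have hσpos : 0 < σ := Real.sqrt_pos.mpr hσ2pos
  have hσsq : σ ^ 2 = σ2 := Real.sq_sqrt hσ2pos.le
  have hS2 : 0 ≤ m * δ - (1 - m) := by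
    have := (div_le_iff₀ hmpos).mp hδ'
    linarith
  set s := Real.sqrt (m * δ - (1 - m)) with hsdef
  have hs0 : 0 ≤ s := Real.sqrt_nonneg _
  have hssq : s ^ 2 = m * δ - (1 - m) := Real.sq_sqrt hS2
  clear_value σ s
  have hqkk : qk k = (p k / m) * (1 - ((f k - μ) / σ) * s) := by
    rw [hqk]; simp
  have hpk : 0 < p k / m := div_pos (hp0 k) hmpos
  have hAsq : 0 < (f k - μ) ^ 2 := pow_pos hApos 2
  have hden : 0 < m * (f k - μ) ^ 2 := mul_pos hmpos hAsq
  have hδk' : m * (f k - μ) ^ 2 * δk = σ2 + (f k - μ) ^ 2 * (1 - m) := by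
    rw [hδk]; field_simp; ring
  have hiff : δ < δk ↔ (f k - μ) ^ 2 * (m * δ - (1 - m)) < σ2 := by
    rw [← mul_lt_mul_iff_right₀ hden, hδk']
    have hring : m * (f k - μ) ^ 2 * δ
        = (f k - μ) ^ 2 * (m * δ - (1 - m)) + (f k - μ) ^ 2 * (1 - m) := by ring
    constructor <;> intro h <;> linarith [hring]
  have hiffe : δ = δk ↔ (f k - μ) ^ 2 * (m * δ - (1 - m)) = σ2 := by
    rw [← mul_right_inj' hden.ne', hδk']
    have hring : m * (f k - μ) ^ 2 * δ
        = (f k - μ) ^ 2 * (m * δ - (1 - m)) + (f k - μ) ^ 2 * (1 - m) := by ring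
    constructor <;> intro h <;> linarith [hring]
  -- bracket positive ↔ δ < δk
  have key1 : (0 < 1 - ((f k - μ) / σ) * s) ↔ δ < δk := by
    rw [hiff, sub_pos, div_mul_eq_mul_div, div_lt_one hσpos]
    have h0 : 0 ≤ (f k - μ) * s := mul_nonneg hApos.le hs0
    constructor
    · intro h
      calc (f k - μ) ^ 2 * (m * δ - (1 - m)) = ((f k - μ) * s) ^ 2 := by
            rw [mul_pow, hssq]
        _ < σ ^ 2 := pow_lt_pow_left₀ h h0 two_ne_zero
        _ = σ2 := hσsq
    · intro h
      have h3 : ((f k - μ) * s) ^ 2 < σ ^ 2 := by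
        rw [mul_pow, hssq, hσsq]; exact h
      exact lt_of_pow_lt_pow_left₀ 2 hσpos.le h3
  have key2 : (1 - ((f k - μ) / σ) * s = 0) ↔ δ = δk := by
    rw [hiffe]
    constructor
    · intro h
      have h' : (f k - μ) * s = σ := by
        rw [sub_eq_zero, div_mul_eq_mul_div, eq_comm, div_eq_one_iff_eq hσpos.ne'] at h
        exact h
      have hsq : ((f k - μ) * s) ^ 2 = σ ^ 2 := by rw [h']
      rw [mul_pow, hssq, hσsq] at hsq
      exact hsq
    · intro h
      have h3 : ((f k - μ) * s) ^ 2 = σ ^ 2 := by rw [mul_pow, hssq, hσsq]; exact h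
      have h0 : 0 ≤ (f k - μ) * s := mul_nonneg hApos.le hs0
      have h4 : (f k - μ) * s = σ := by
        rw [← Real.sqrt_sq h0, h3, Real.sqrt_sq hσpos.le]
      rw [div_mul_eq_mul_div, h4, div_self hσpos.ne', sub_self]
  refine ⟨?_, ?_, ?_⟩
  · rw [hqkk, mul_pos_iff]
    constructor
    · rintro (⟨_, h⟩ | ⟨h, _⟩)
      · exact key1.mp h
      · exact absurd h (not_lt.mpr hpk.le)
    · intro h; exact Or.inl ⟨hpk, key1.mpr h⟩
  · rw [hqkk, mul_eq_zero]
    constructor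
    · rintro (h | h)
      · exact absurd h hpk.ne'
      · exact key2.mp h
    · intro h; exact Or.inr (key2.mpr h)
  · intro hpos i hik
    have hb : 0 < 1 - ((f k - μ) / σ) * s := by
      rw [hqkk] at hpos
      by_contra hcon
      push_neg at hcon
      nlinarith
    rw [hqk]
    simp only [hik, if_pos]
    apply mul_pos (div_pos (hp0 i) hmpos)
    have h1 : f i - μ ≤ f k - μ := by have := hf hik; linarith
    have hle : ((f i - μ) / σ) * s ≤ ((f k - μ) / σ) * s :=
      mul_le_mul_of_nonneg_right ((div_le_div_iff_of_pos_right hσpos).mpr h1) hs0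
    linarith
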